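/- If there exists an integer n' ≤ 1 such that 0 < p(n') < p(n'−1), then 0 < p(n) < p(n−1) for all integers n ≤ n'. -/
import Mathlib


/-- `pSeq a b k l p` says that `p : ℤ → ℤ` is the (unique) sequence with `p 0 = l`,
`p 1 = k`, and `p (m+2) = b * p (m+1) - p m` for even `m`,
`p (m+2) = a * p (m+1) - p m` for odd `m`. -/
def pSeq (a b k l : ℤ) (p : ℤ → ℤ) : Prop :=
  p 0 = l ∧ p 1 = k ∧
    ∀ m : ℤ, p (m + 2) = (if Even m then b else a) * p (m + 1) - p m

theorem p_decreasing_of_exists (a b k l : ℤ) (ha : 2 ≤ a) (hb : 2 ≤ b) (hab : 4 < a * b)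
    (p : ℤ → ℤ) (hp : pSeq a b k l p)
    (n' : ℤ) (hn' : n' ≤ 1) (h1 : 0 < p n') (h2 : p n' < p (n' - 1)) :
    ∀ n : ℤ, n ≤ n' → 0 < p n ∧ p n < p (n - 1) := by
  have step : ∀ m : ℤ, (0 < p m ∧ p m < p (m - 1)) →
      (0 < p (m - 1) ∧ p (m - 1) < p (m - 1 - 1)) := by
    intro m ⟨hm1, hm2⟩
    have hrec := hp.2.2 (m - 2)
    have e1 : m - 2 + 2 = m := by ring
    have e2 : m - 2 + 1 = m - 1 := by ring
    rw [e1, e2] at hrec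
    have hc : 2 ≤ (if Even (m - 2) then b else a) := by split <;> assumption
    constructor
    · linarith
    · have : m - 1 - 1 = m - 2 := by ring
      rw [this]
      nlinarith [hrec, hc, hm1, hm2]
  have key : ∀ d : ℕ, 0 < p (n' - d) ∧ p (n' - d) < p (n' - d - 1) := by
    intro d
    induction d with
    | zero => simpa using ⟨h1, h2⟩
    | succ k ih =>
      have := step (n' - k) ih
      have e : n' - (k + 1 : ℕ) = n' - k - 1 := by push_cast; ring
      rw [e]
      exact this
  intro n hn
  have hd : n = n' - ((n' - n).toNat : ℤ) := by
    have : ((n' - n).toNat : ℤ) = n' - n := Int.toNat_of_nonneg (by linarith)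
    linarith
  rw [hd]
  exact key (n' - n).toNat
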